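/- For finite multisets M, N of natural numbers, M is smaller than N in the Dershowitz–Manna order if and only if the non-increasing sorted list of M precedes the non-increasing sorted list of N lexicographically (with a proper prefix counting as smaller). In other words, on finite multisets over a linearly ordered set like ℕ, the Dershowitz–Manna order coincides with sorted-descending lexicographic comparison. -/

import Mathlib

/-- The elements of a finite multiset of naturals listed in non-increasing order. -/
def sortDesc (m : Multiset ℕ) : List ℕ := (Multiset.sort m (· ≤ ·)).reverse

/-- The complexity order on finite multisets of naturals: compare the
non-increasing sorted lists lexicographically, a proper prefix being smaller. -/
def MLT (m m' : Multiset ℕ) : Prop := List.Lex (· < ·) (sortDesc m) (sortDesc m')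

/-- The Dershowitz–Manna order on finite multisets of naturals. -/
def DMLT (M N : Multiset ℕ) : Prop :=
  ∃ X Y : Multiset ℕ, X ≠ 0 ∧ X ≤ N ∧ M = N - X + Y ∧ ∀ y ∈ Y, ∃ x ∈ X, y < x

lemma sortDesc_sorted (m : Multiset ℕ) : (sortDesc m).Pairwise (· ≥ ·) := by
  rw [sortDesc, List.pairwise_reverse]
  exact Multiset.pairwise_sort m (· ≤ ·)

lemma sortDesc_coe (m : Multiset ℕ) : ((sortDesc m : List ℕ) : Multiset ℕ) = m := by
  rw [sortDesc, Multiset.coe_reverse, Multiset.sort_eq]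

lemma eq_sortDesc {l : List ℕ} {m : Multiset ℕ} (h : (l : Multiset ℕ) = m)
    (hs : l.Pairwise (· ≥ ·)) : l = sortDesc m :=
  List.Perm.eq_of_pairwise' hs (sortDesc_sorted m)
    (Multiset.coe_eq_coe.mp (by rw [h, sortDesc_coe]))

lemma mem_sortDesc {a : ℕ} {m : Multiset ℕ} : a ∈ sortDesc m ↔ a ∈ m := by
  rw [← Multiset.mem_coe, sortDesc_coe]

/-- Decomposition of the descending sort around a pivot `k`. -/
lemma sortDesc_decomp (M : Multiset ℕ) (k : ℕ) :
    sortDesc M = sortDesc (M.filter (k < ·)) ++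
      (List.replicate (M.count k) k ++ sortDesc (M.filter (· < k))) := by
  symm
  apply eq_sortDesc
  · rw [← Multiset.coe_add, ← Multiset.coe_add, Multiset.coe_replicate,
      sortDesc_coe, sortDesc_coe]
    ext j
    simp only [Multiset.count_add, Multiset.count_filter, Multiset.count_replicate]
    rcases lt_trichotomy j k with h | rfl | h
    · simp [h, h.ne', not_lt.mpr h.le]
    · simp
    · simp [h, h.ne, not_lt.mpr h.le]
  · rw [List.pairwise_append]
    refine ⟨sortDesc_sorted _, ?_, ?_⟩
    · rw [List.pairwise_append]
      refine ⟨List.pairwise_replicate.mpr (by simp), sortDesc_sorted _, ?_⟩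
      intro a ha b hb
      have hb' : b < k := (Multiset.mem_filter.mp (mem_sortDesc.mp hb)).2
      have ha' := List.eq_of_mem_replicate ha
      omega
    · intro a ha b hb
      have ha' : k < a := (Multiset.mem_filter.mp (mem_sortDesc.mp ha)).2
      rcases List.mem_append.mp hb with hb | hb
      · have := List.eq_of_mem_replicate hb; omega
      · have : b < k := (Multiset.mem_filter.mp (mem_sortDesc.mp hb)).2; omega

/-- If counts agree above `k` and `M.count k < N.count k`, then `MLT M N`. -/
lemma mlt_of_count (M N : Multiset ℕ) (k : ℕ)
    (hup : ∀ j, k < j → M.count j = N.count j) (hk : M.count k < N.count k) :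
    MLT M N := by
  have hfil : M.filter (k < ·) = N.filter (k < ·) := by
    ext j
    simp only [Multiset.count_filter]
    split
    · exact hup j (by assumption)
    · rfl
  rw [MLT, sortDesc_decomp M k, sortDesc_decomp N k, hfil]
  apply List.Lex.append_left
  have : List.replicate (N.count k) k =
      List.replicate (M.count k) k ++ List.replicate (N.count k - M.count k) k := by
    rw [← List.replicate_add]; congr 1; omega
  rw [this, List.append_assoc]
  apply List.Lex.append_left
  have hrep : List.replicate (N.count k - M.count k) k = k ::
      List.replicate (N.count k - M.count k - 1) k := by
    rw [← List.replicate_succ]; congr 1; omega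
  rw [hrep]
  cases h : sortDesc (M.filter (· < k)) with
  | nil => exact List.Lex.nil
  | cons a t =>
    have ha : a ∈ sortDesc (M.filter (· < k)) := by rw [h]; exact List.mem_cons_self
    exact List.Lex.rel (Multiset.mem_filter.mp (mem_sortDesc.mp ha)).2

/-- If counts agree above `k` and `M.count k < N.count k`, then `DMLT M N`. -/
lemma dmlt_of_count (M N : Multiset ℕ) (k : ℕ)
    (hup : ∀ j, k < j → M.count j = N.count j) (hk : M.count k < N.count k) :
    DMLT M N := by
  refine ⟨Multiset.replicate (N.count k - M.count k) k + N.filter (· < k),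
    M.filter (· < k), ?_, ?_, ?_, ?_⟩
  · intro h0
    have := congrArg (Multiset.count k) h0
    simp [Multiset.count_replicate, Multiset.count_filter] at this
    omega
  · rw [Multiset.le_iff_count]
    intro j
    simp only [Multiset.count_add, Multiset.count_replicate, Multiset.count_filter]
    rcases lt_trichotomy j k with h | rfl | h
    · simp [h, h.ne', not_lt.mpr h.le]
    · simp
    · simp [h, h.ne, not_lt.mpr h.le]
  · ext j
    rw [Multiset.count_add, Multiset.count_sub]
    simp only [Multiset.count_add, Multiset.count_replicate, Multiset.count_filter]
    rcases lt_trichotomy j k with h | rfl | h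
    · simp only [if_pos h, if_neg h.ne', if_neg (not_lt.mpr h.le)]
      omega
    · simp
      omega
    · have := hup j h
      simp only [if_pos h, if_neg h.ne, if_neg (not_lt.mpr h.le)]
      omega
  · intro y hy
    refine ⟨k, ?_, (Multiset.mem_filter.mp hy).2⟩
    rw [Multiset.mem_add]
    left
    rw [Multiset.mem_replicate]
    exact ⟨by omega, rfl⟩

/-- From `DMLT M N`, find the witnessing pivot. -/
lemma count_of_dmlt {M N : Multiset ℕ} (h : DMLT M N) :
    ∃ k, (∀ j, k < j → M.count j = N.count j) ∧ M.count k < N.count k := by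
  obtain ⟨X, Y, hX0, hXN, hM, hY⟩ := h
  obtain ⟨a, ha, hamax⟩ : ∃ a ∈ X, ∀ b ∈ X, b ≤ a := by
    obtain ⟨a, ha⟩ := Multiset.exists_mem_of_ne_zero hX0
    obtain ⟨b, hb, hbm⟩ := X.toFinset.exists_max_image id ⟨a, Multiset.mem_toFinset.mpr ha⟩
    exact ⟨b, Multiset.mem_toFinset.mp hb, fun c hc => hbm c (Multiset.mem_toFinset.mpr hc)⟩
  have hYlt : ∀ y ∈ Y, y < a := by
    intro y hy
    obtain ⟨x, hx, hyx⟩ := hY y hy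
    exact lt_of_lt_of_le hyx (hamax x hx)
  have hcount : ∀ j, M.count j = N.count j - X.count j + Y.count j := by
    intro j
    rw [hM, Multiset.count_add, Multiset.count_sub]
  have hXcount : ∀ j, X.count j ≤ N.count j := Multiset.le_iff_count.mp hXN
  refine ⟨a, ?_, ?_⟩
  · intro j hj
    have hXj : X.count j = 0 := Multiset.count_eq_zero.mpr (fun hm => by
      have := hamax j hm; omega)
    have hYj : Y.count j = 0 := Multiset.count_eq_zero.mpr (fun hm => by
      have := hYlt j hm; omega)
    have := hXcount j
    rw [hcount j, hXj, hYj]; omega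
  · have hXa : 1 ≤ X.count a := Multiset.one_le_count_iff_mem.mpr ha
    have hYa : Y.count a = 0 := Multiset.count_eq_zero.mpr (fun hm => by
      have := hYlt a hm; omega)
    rw [hcount a, hYa]
    have := hXcount a
    omega

theorem stmt_2 (M N : Multiset ℕ) : DMLT M N ↔ MLT M N := by
  constructor
  · intro h
    obtain ⟨k, h1, h2⟩ := count_of_dmlt h
    exact mlt_of_count M N k h1 h2
  · intro h
    have hasymm := (List.Lex.asymm (α := ℕ) (· < ·)).asymm
    have hne : M ≠ N := by
      rintro rfl
      exact hasymm _ _ h h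
    obtain ⟨j0, hj0⟩ : ∃ j, M.count j ≠ N.count j := by
      by_contra hc
      push_neg at hc
      exact hne (Multiset.ext.mpr hc)
    set S := (M + N).toFinset.filter (fun j => M.count j ≠ N.count j) with hS
    have hj0S : j0 ∈ S := by
      rw [hS, Finset.mem_filter, Multiset.mem_toFinset, Multiset.mem_add]
      refine ⟨?_, hj0⟩
      rw [← Multiset.count_pos, ← Multiset.count_pos]
      omega
    obtain ⟨k, hkS, hkmax⟩ := S.exists_max_image id ⟨j0, hj0S⟩
    have hkdiff : M.count k ≠ N.count k := (Finset.mem_filter.mp hkS).2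
    have hup : ∀ j, k < j → M.count j = N.count j := by
      intro j hj
      by_contra hc
      have hjS : j ∈ S := by
        rw [hS, Finset.mem_filter, Multiset.mem_toFinset, Multiset.mem_add]
        refine ⟨?_, hc⟩
        rw [← Multiset.count_pos, ← Multiset.count_pos]
        omega
      have := hkmax j hjS
      simp only [id] at this
      omega
    rcases lt_or_gt_of_ne hkdiff with hlt | hgt
    · exact dmlt_of_count M N k hup hlt
    · exact absurd (mlt_of_count N M k (fun j hj => (hup j hj).symm) hgt) (hasymm _ _ h)
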